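/- Let f, g ∈ E_{(beta,mu)} with beta > 0 and mu > 1, and let psi(m) = (2π)^{−1/2} (f ∗ g)(m) = (2π)^{−1/2} ∫_ℝ f(m − m1) g(m1) dm1 be their convolution. Then psi ∈ E_{(beta,mu)} and F^{-1}(f)(z) · F^{-1}(g)(z) = F^{-1}(psi)(z) for all z in the strip H_beta = {z ∈ ℂ : |Im(z)| < beta}. -/

import Mathlib

/- Statement 9: convolution on E_{(beta,mu)} and inverse Fourier transform of products. -/

open MeasureTheory

noncomputable def eW (beta mu m : ℝ) : ℝ := (1 + |m|) ^ mu * Real.exp (beta * |m|)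

/-- The inverse Fourier transform, extended to complex arguments. -/
noncomputable def invFourier (f : ℝ → ℂ) (z : ℂ) : ℂ :=
  (1 / Real.sqrt (2 * Real.pi) : ℝ) • ∫ m : ℝ, f m * Complex.exp (Complex.I * z * m)

/-- The horizontal strip `H_beta`. -/
def hStrip (beta : ℝ) : Set ℂ := {z : ℂ | |z.im| < beta}

lemma one_le_eW {beta mu : ℝ} (hbeta : 0 ≤ beta) (hmu : 0 ≤ mu) (m : ℝ) :
    1 ≤ eW beta mu m := by
  unfold eW
  have h1 : (1:ℝ) ≤ (1+|m|) ^ mu := Real.one_le_rpow (by simp [abs_nonneg]) hmu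
  have h2 : (1:ℝ) ≤ Real.exp (beta*|m|) := Real.one_le_exp (by positivity)
  nlinarith

lemma eW_key {beta mu : ℝ} (hbeta : 0 ≤ beta) (hmu : 0 ≤ mu) (a b : ℝ) :
    eW beta mu (a + b) ≤
      2 ^ mu * ((1+|a|) ^ (-mu) + (1+|b|) ^ (-mu)) * (eW beta mu a * eW beta mu b) := by
  unfold eW
  have hA : (0:ℝ) < 1 + |a| := by positivity
  have hB : (0:ℝ) < 1 + |b| := by positivity
  have hexp : Real.exp (beta*|a+b|) ≤ Real.exp (beta*|a|) * Real.exp (beta*|b|) := by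
    rw [← Real.exp_add]
    apply Real.exp_le_exp.mpr
    have := abs_add_le a b
    nlinarith
  have hpoly : (1+|a+b|) ^ mu ≤
      2 ^ mu * ((1+|a|) ^ (-mu) + (1+|b|) ^ (-mu)) * ((1+|a|) ^ mu * (1+|b|) ^ mu) := by
    rcases le_total |a| |b| with h | h
    · have h1 : (1+|a+b|) ^ mu ≤ (2*(1+|b|)) ^ mu := by
        apply Real.rpow_le_rpow (by positivity) _ hmu
        have := abs_add_le a b; nlinarith
      have h2 : (2*(1+|b|)) ^ mu = 2 ^ mu * (1+|b|) ^ mu :=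
        Real.mul_rpow (by norm_num) (le_of_lt hB)
      have h3 : (1+|a|) ^ (-mu) * (1+|a|) ^ mu = 1 := by
        rw [Real.rpow_neg hA.le]
        exact inv_mul_cancel₀ (Real.rpow_pos_of_pos hA mu).ne'
      have h4 : (0:ℝ) ≤ (1+|b|) ^ (-mu) := Real.rpow_nonneg hB.le _
      have h5 : (0:ℝ) < (2:ℝ) ^ mu := Real.rpow_pos_of_pos (by norm_num) mu
      have h6 : (0:ℝ) ≤ (1+|a|) ^ mu * (1+|b|) ^ mu := by positivity
      calc (1+|a+b|) ^ mu ≤ 2 ^ mu * (1+|b|) ^ mu := by rw [← h2]; exact h1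
        _ = 2 ^ mu * (1+|a|) ^ (-mu) * ((1+|a|) ^ mu * (1+|b|) ^ mu) := by
            linear_combination (-(2 ^ mu * (1+|b|) ^ mu)) * h3
        _ ≤ 2 ^ mu * ((1+|a|) ^ (-mu) + (1+|b|) ^ (-mu)) * ((1+|a|) ^ mu * (1+|b|) ^ mu) := by
            have h7 : (0:ℝ) ≤ (1+|a|) ^ (-mu) := Real.rpow_nonneg hA.le _
            exact mul_le_mul_of_nonneg_right
              (mul_le_mul_of_nonneg_left (le_add_of_nonneg_right h4) h5.le) h6
    · have h1 : (1+|a+b|) ^ mu ≤ (2*(1+|a|)) ^ mu := by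
        apply Real.rpow_le_rpow (by positivity) _ hmu
        have := abs_add_le a b; nlinarith
      have h2 : (2*(1+|a|)) ^ mu = 2 ^ mu * (1+|a|) ^ mu :=
        Real.mul_rpow (by norm_num) (le_of_lt hA)
      have h3 : (1+|b|) ^ (-mu) * (1+|b|) ^ mu = 1 := by
        rw [Real.rpow_neg hB.le]
        exact inv_mul_cancel₀ (Real.rpow_pos_of_pos hB mu).ne'
      have h4 : (0:ℝ) ≤ (1+|a|) ^ (-mu) := Real.rpow_nonneg hA.le _
      have h5 : (0:ℝ) < (2:ℝ) ^ mu := Real.rpow_pos_of_pos (by norm_num) mu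
      have h6 : (0:ℝ) ≤ (1+|a|) ^ mu * (1+|b|) ^ mu := by positivity
      calc (1+|a+b|) ^ mu ≤ 2 ^ mu * (1+|a|) ^ mu := by rw [← h2]; exact h1
        _ = 2 ^ mu * (1+|b|) ^ (-mu) * ((1+|a|) ^ mu * (1+|b|) ^ mu) := by
            linear_combination (-(2 ^ mu * (1+|a|) ^ mu)) * h3
        _ ≤ 2 ^ mu * ((1+|a|) ^ (-mu) + (1+|b|) ^ (-mu)) * ((1+|a|) ^ mu * (1+|b|) ^ mu) := by
            have h7 : (0:ℝ) ≤ (1+|b|) ^ (-mu) := Real.rpow_nonneg hB.le _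
            exact mul_le_mul_of_nonneg_right
              (mul_le_mul_of_nonneg_left (le_add_of_nonneg_left h4) h5.le) h6
  have hab : (0:ℝ) ≤ (1+|a+b|) ^ mu := Real.rpow_nonneg (by positivity) _
  have e1 : (0:ℝ) < Real.exp (beta*|a+b|) := Real.exp_pos _
  have e2 : (0:ℝ) < Real.exp (beta*|a|) * Real.exp (beta*|b|) := by positivity
  calc (1+|a+b|) ^ mu * Real.exp (beta*|a+b|)
      ≤ (2 ^ mu * ((1+|a|) ^ (-mu) + (1+|b|) ^ (-mu)) * ((1+|a|) ^ mu * (1+|b|) ^ mu)) *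
        (Real.exp (beta*|a|) * Real.exp (beta*|b|)) := by
        apply mul_le_mul hpoly hexp e1.le
        nlinarith
    _ = 2 ^ mu * ((1+|a|) ^ (-mu) + (1+|b|) ^ (-mu)) *
        ((1+|a|) ^ mu * Real.exp (beta*|a|) * ((1+|b|) ^ mu * Real.exp (beta*|b|))) := by ring

lemma integrable_w {mu : ℝ} (hmu : 1 < mu) :
    Integrable (fun t : ℝ => (1 + |t|) ^ (-mu)) := by
  have h := integrable_one_add_norm (E := ℝ) (μ := volume) (r := mu) (by simpa using hmu)
  simpa [Real.norm_eq_abs] using h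

lemma integrable_mul_exp {beta mu B : ℝ} (hbeta : 0 < beta) (hmu : 1 < mu) {f : ℝ → ℂ}
    (hf : Continuous f) (hB : ∀ m, eW beta mu m * ‖f m‖ ≤ B) {z : ℂ} (hz : |z.im| ≤ beta) :
    Integrable (fun m : ℝ => f m * Complex.exp (Complex.I * z * m)) := by
  have hw : Integrable (fun t : ℝ => B * (1 + |t|) ^ (-mu)) := (integrable_w hmu).const_mul B
  refine hw.mono' ?_ (Filter.Eventually.of_forall fun m => ?_)
  · exact (hf.mul (Complex.continuous_exp.comp
      (continuous_const.mul Complex.continuous_ofReal))).aestronglyMeasurable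
  · have hre : (Complex.I * z * (m : ℂ)).re = -z.im * m := by
      simp [Complex.mul_re, Complex.mul_im]
    rw [norm_mul, Complex.norm_exp, hre]
    have h1 : Real.exp (-z.im * m) ≤ Real.exp (beta * |m|) := by
      apply Real.exp_le_exp.mpr
      have h2 : -z.im * m ≤ |z.im| * |m| := by
        calc -z.im * m ≤ |(-z.im) * m| := le_abs_self _
          _ = |z.im| * |m| := by rw [abs_mul, abs_neg]
      nlinarith [abs_nonneg m, abs_nonneg z.im]
    have hP : (0:ℝ) < (1 + |m|) ^ mu := Real.rpow_pos_of_pos (by positivity) mu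
    have hkey : (1 + |m|) ^ mu * (‖f m‖ * Real.exp (-z.im * m)) ≤ B := by
      calc (1 + |m|) ^ mu * (‖f m‖ * Real.exp (-z.im * m))
          ≤ (1 + |m|) ^ mu * (‖f m‖ * Real.exp (beta * |m|)) := by
            exact mul_le_mul_of_nonneg_left
              (mul_le_mul_of_nonneg_left h1 (norm_nonneg _)) hP.le
        _ = eW beta mu m * ‖f m‖ := by unfold eW; ring
        _ ≤ B := hB m
    rw [Real.rpow_neg (by positivity), ← div_eq_mul_inv, le_div_iff₀ hP]
    nlinarith [hkey]

lemma conv_bound {beta mu Bf Bg : ℝ} (hbeta : 0 < beta) (hmu : 1 < mu)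
    {f g : ℝ → ℂ} (hBf : ∀ m, eW beta mu m * ‖f m‖ ≤ Bf)
    (hBg : ∀ m, eW beta mu m * ‖g m‖ ≤ Bg) (m : ℝ) :
    eW beta mu m * ‖∫ m1 : ℝ, f (m - m1) * g m1‖ ≤
      2 ^ mu * Bf * Bg * (2 * ∫ t : ℝ, (1 + |t|) ^ (-mu)) := by
  have hb0 : (0:ℝ) ≤ beta := hbeta.le
  have hmu0 : (0:ℝ) ≤ mu := by linarith
  have heW1 : ∀ x : ℝ, 1 ≤ eW beta mu x := one_le_eW hb0 hmu0
  have heWpos : ∀ x : ℝ, (0:ℝ) < eW beta mu x := fun x => lt_of_lt_of_le one_pos (heW1 x)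
  have hBf0 : 0 ≤ Bf := le_trans (mul_nonneg (heWpos 0).le (norm_nonneg _)) (hBf 0)
  have hBg0 : 0 ≤ Bg := le_trans (mul_nonneg (heWpos 0).le (norm_nonneg _)) (hBg 0)
  have hw : Integrable (fun t : ℝ => (1 + |t|) ^ (-mu)) := integrable_w hmu
  have hwa : Integrable (fun m1 : ℝ => (1 + |m - m1|) ^ (-mu)) := by
    have e : (fun m1 : ℝ => (1 + |m - m1|) ^ (-mu))
        = fun m1 : ℝ => (1 + |m1 - m|) ^ (-mu) := funext fun m1 => by rw [abs_sub_comm]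
    rw [e]; exact hw.comp_sub_right m
  have h2mu : (0:ℝ) < 2 ^ mu := Real.rpow_pos_of_pos (by norm_num) mu
  have hptw : ∀ m1 : ℝ, eW beta mu m * ‖f (m - m1) * g m1‖ ≤
      2 ^ mu * Bf * Bg * ((1 + |m - m1|) ^ (-mu) + (1 + |m1|) ^ (-mu)) := by
    intro m1
    have hk := eW_key hb0 hmu0 (m - m1) m1
    rw [show m - m1 + m1 = m from by ring] at hk
    have hwa0 : (0:ℝ) ≤ (1 + |m - m1|) ^ (-mu) := Real.rpow_nonneg (by positivity) _
    have hwb0 : (0:ℝ) ≤ (1 + |m1|) ^ (-mu) := Real.rpow_nonneg (by positivity) _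
    calc eW beta mu m * ‖f (m - m1) * g m1‖
        = eW beta mu m * (‖f (m - m1)‖ * ‖g m1‖) := by rw [norm_mul]
      _ ≤ (2 ^ mu * ((1 + |m - m1|) ^ (-mu) + (1 + |m1|) ^ (-mu)) *
            (eW beta mu (m - m1) * eW beta mu m1)) * (‖f (m - m1)‖ * ‖g m1‖) :=
          mul_le_mul_of_nonneg_right hk (by positivity)
      _ = (2 ^ mu * ((1 + |m - m1|) ^ (-mu) + (1 + |m1|) ^ (-mu))) *
            ((eW beta mu (m - m1) * ‖f (m - m1)‖) * (eW beta mu m1 * ‖g m1‖)) := by ring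
      _ ≤ (2 ^ mu * ((1 + |m - m1|) ^ (-mu) + (1 + |m1|) ^ (-mu))) * (Bf * Bg) := by
          refine mul_le_mul_of_nonneg_left ?_ (by positivity)
          exact mul_le_mul (hBf _) (hBg _) (mul_nonneg (heWpos _).le (norm_nonneg _)) hBf0
      _ = 2 ^ mu * Bf * Bg * ((1 + |m - m1|) ^ (-mu) + (1 + |m1|) ^ (-mu)) := by ring
  calc eW beta mu m * ‖∫ m1 : ℝ, f (m - m1) * g m1‖
      ≤ eW beta mu m * ∫ m1 : ℝ, ‖f (m - m1) * g m1‖ :=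
        mul_le_mul_of_nonneg_left (norm_integral_le_integral_norm _) (heWpos m).le
    _ = ∫ m1 : ℝ, eW beta mu m * ‖f (m - m1) * g m1‖ := (integral_const_mul _ _).symm
    _ ≤ ∫ m1 : ℝ, 2 ^ mu * Bf * Bg * ((1 + |m - m1|) ^ (-mu) + (1 + |m1|) ^ (-mu)) := by
        refine integral_mono_of_nonneg (Filter.Eventually.of_forall fun m1 => ?_)
          (((hwa.add hw)).const_mul _) (Filter.Eventually.of_forall hptw)
        exact mul_nonneg (heWpos m).le (norm_nonneg _)
    _ = 2 ^ mu * Bf * Bg * ((∫ m1 : ℝ, (1 + |m - m1|) ^ (-mu)) + ∫ t : ℝ, (1 + |t|) ^ (-mu)) := by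
        rw [integral_const_mul, integral_add hwa hw]
    _ = 2 ^ mu * Bf * Bg * (2 * ∫ t : ℝ, (1 + |t|) ^ (-mu)) := by
        have e : (fun m1 : ℝ => (1 + |m - m1|) ^ (-mu))
            = fun m1 : ℝ => (1 + |m1 - m|) ^ (-mu) := funext fun m1 => by rw [abs_sub_comm]
        rw [e, integral_sub_right_eq_self (fun t : ℝ => (1 + |t|) ^ (-mu)) m]
        ring

lemma fourier_conv {f g : ℝ → ℂ} {z : ℂ}
    (hF1 : Integrable (fun m : ℝ => f m * Complex.exp (Complex.I * z * m)))
    (hF2 : Integrable (fun m : ℝ => g m * Complex.exp (Complex.I * z * m))) :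
    (∫ m : ℝ, f m * Complex.exp (Complex.I * z * m)) *
      (∫ m : ℝ, g m * Complex.exp (Complex.I * z * m)) =
    ∫ m : ℝ, (∫ v : ℝ, f (m - v) * g v) * Complex.exp (Complex.I * z * m) := by
  set E : ℝ → ℂ := fun m => Complex.exp (Complex.I * z * m) with hE
  set F1 : ℝ → ℂ := fun m => f m * E m with hF1d
  set F2 : ℝ → ℂ := fun m => g m * E m with hF2d
  have hEadd : ∀ v m : ℝ, E v * E (m - v) = E m := by
    intro v m
    rw [hE]
    simp only
    rw [← Complex.exp_add]
    congr 1
    push_cast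
    ring
  have hint : Integrable (Function.uncurry fun v m : ℝ => F2 v * F1 (m - v))
      ((volume : Measure ℝ).prod volume) := by
    have h0 := hF2.convolution_integrand (ContinuousLinearMap.mul ℝ ℂ) hF1
    have h1 := h0.swap
    exact (by simpa [Function.uncurry, Function.comp_def] using h1 :
      Integrable (fun x : ℝ × ℝ => F2 x.1 * F1 (x.2 - x.1)) ((volume : Measure ℝ).prod volume))
  calc (∫ m : ℝ, F1 m) * ∫ m : ℝ, F2 m
      = ∫ v : ℝ, F2 v * ∫ m : ℝ, F1 m := by
        rw [integral_mul_const]; ring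
    _ = ∫ v : ℝ, ∫ m : ℝ, F2 v * F1 (m - v) := by
        congr 1
        funext v
        rw [← integral_sub_right_eq_self F1 v, integral_const_mul]
    _ = ∫ m : ℝ, ∫ v : ℝ, F2 v * F1 (m - v) := integral_integral_swap hint
    _ = ∫ m : ℝ, (∫ v : ℝ, f (m - v) * g v) * E m := by
        congr 1
        funext m
        rw [show (fun v : ℝ => F2 v * F1 (m - v)) = fun v : ℝ => (f (m - v) * g v) * E m from
          funext fun v => by rw [hF1d, hF2d]; simp only; rw [← hEadd v m]; ring]
        exact integral_mul_const _ _

theorem stmt_9 (beta mu : ℝ) (hbeta : 0 < beta) (hmu : 1 < mu)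
    (f g : ℝ → ℂ) (hf : Continuous f) (hg : Continuous g)
    (Bf Bg : ℝ) (hBf : ∀ m : ℝ, eW beta mu m * ‖f m‖ ≤ Bf)
    (hBg : ∀ m : ℝ, eW beta mu m * ‖g m‖ ≤ Bg) :
    Continuous (fun m : ℝ =>
      (1 / Real.sqrt (2 * Real.pi) : ℝ) • ∫ m1 : ℝ, f (m - m1) * g m1) ∧
    (∃ B : ℝ, ∀ m : ℝ,
      eW beta mu m * ‖(1 / Real.sqrt (2 * Real.pi) : ℝ) • ∫ m1 : ℝ, f (m - m1) * g m1‖ ≤ B) ∧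
    ∀ z ∈ hStrip beta,
      invFourier f z * invFourier g z
        = invFourier (fun m => (1 / Real.sqrt (2 * Real.pi) : ℝ) • ∫ m1 : ℝ, f (m - m1) * g m1) z := by
  have hb0 : (0:ℝ) ≤ beta := hbeta.le
  have hmu0 : (0:ℝ) ≤ mu := by linarith
  have hc0 : (0:ℝ) ≤ (1 / Real.sqrt (2 * Real.pi) : ℝ) := by positivity
  have hfB : ∀ m : ℝ, ‖f m‖ ≤ Bf := fun m =>
    calc ‖f m‖ = 1 * ‖f m‖ := (one_mul _).symm
      _ ≤ eW beta mu m * ‖f m‖ :=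
        mul_le_mul_of_nonneg_right (one_le_eW hb0 hmu0 m) (norm_nonneg _)
      _ ≤ Bf := hBf m
  have hgi : Integrable g := by
    have h := integrable_mul_exp hbeta hmu hg hBg (z := 0) (by simp [hbeta.le])
    simpa using h
  refine ⟨?_, ?_, ?_⟩
  · refine Continuous.const_smul (?_ : Continuous fun m : ℝ => ∫ m1 : ℝ, f (m - m1) * g m1)
      (1 / Real.sqrt (2 * Real.pi) : ℝ)
    apply continuous_of_dominated (bound := fun m1 : ℝ => Bf * ‖g m1‖)
    · intro m
      exact ((hf.comp (continuous_const.sub continuous_id)).mul hg).aestronglyMeasurable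
    · intro m
      refine Filter.Eventually.of_forall fun m1 => ?_
      rw [norm_mul]
      exact mul_le_mul_of_nonneg_right (hfB _) (norm_nonneg _)
    · exact hgi.norm.const_mul Bf
    · exact Filter.Eventually.of_forall fun m1 =>
        (hf.comp (continuous_id.sub continuous_const)).mul continuous_const
  · refine ⟨(1 / Real.sqrt (2 * Real.pi)) *
      (2 ^ mu * Bf * Bg * (2 * ∫ t : ℝ, (1 + |t|) ^ (-mu))), fun m => ?_⟩
    rw [norm_smul, Real.norm_eq_abs, abs_of_nonneg hc0]
    calc eW beta mu m * ((1 / Real.sqrt (2 * Real.pi)) * ‖∫ m1 : ℝ, f (m - m1) * g m1‖)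
        = (1 / Real.sqrt (2 * Real.pi)) * (eW beta mu m * ‖∫ m1 : ℝ, f (m - m1) * g m1‖) := by
          ring
      _ ≤ (1 / Real.sqrt (2 * Real.pi)) *
          (2 ^ mu * Bf * Bg * (2 * ∫ t : ℝ, (1 + |t|) ^ (-mu))) :=
          mul_le_mul_of_nonneg_left (conv_bound hbeta hmu hBf hBg m) hc0
  · intro z hz
    have hzb : |z.im| ≤ beta := le_of_lt hz
    have hF1 := integrable_mul_exp hbeta hmu hf hBf hzb
    have hF2 := integrable_mul_exp hbeta hmu hg hBg hzb
    unfold invFourier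
    rw [smul_mul_smul_comm]
    simp only [smul_mul_assoc]
    rw [integral_smul, smul_smul]
    congr 1
    exact fourier_conv hF1 hF2
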